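/- Let A, B, C be n×n matrices over the nonnegative reals with λ > 0, μ > 0 and Tr(C) ≤ 1, and suppose H(max(μ, θ)) ≤ max(λ, σ). Then: (i) every feasible positive vector x (i.e., with C ⊗ x ≤ x) satisfies f_A(x) ≥ max(λ, σ) and f_B(x) ≥ max(μ, θ); and (ii) there exists a feasible positive vector x attaining f_A(x) = max(λ, σ) and f_B(x) = max(μ, θ) simultaneously. Consequently the Pareto frontier of the bi-objective problem of minimizing (f_A(x), f_B(x)) over feasible x reduces to the single point (max(λ, σ), max(μ, θ)). -/

import Mathlib

open scoped NNReal

/-- Square matrices over the max-times semifield of nonnegative reals. -/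
abbrev TMat (n : ℕ) := Matrix (Fin n) (Fin n) ℝ≥0

/-- Tropical (max-times) matrix product. -/
noncomputable def tmul {n : ℕ} (A B : TMat n) : TMat n :=
  fun i j => Finset.univ.sup fun k => A i k * B k j

/-- Tropical (max-times) matrix-vector product. -/
noncomputable def tmulVec {n : ℕ} (A : TMat n) (x : Fin n → ℝ≥0) : Fin n → ℝ≥0 :=
  fun i => Finset.univ.sup fun j => A i j * x j

/-- Tropical identity matrix. -/
noncomputable def tId (n : ℕ) : TMat n := fun i j => if i = j then 1 else 0

/-- Tropical matrix powers. -/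
noncomputable def tpow {n : ℕ} (A : TMat n) : ℕ → TMat n
  | 0 => tId n
  | k + 1 => tmul A (tpow A k)

/-- Tropical (entrywise max) matrix addition. -/
noncomputable def tadd {n : ℕ} (A B : TMat n) : TMat n := fun i j => A i j ⊔ B i j

/-- Entrywise scalar multiplication. -/
noncomputable def tsmul {n : ℕ} (a : ℝ≥0) (A : TMat n) : TMat n := fun i j => a * A i j

/-- Tropical trace: tr A = max_i a_{ii}. -/
noncomputable def ttr {n : ℕ} (A : TMat n) : ℝ≥0 := Finset.univ.sup fun i => A i i

/-- Tropical "determinant": Tr(A) = max_{k=1..n} tr(A^k). -/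
noncomputable def tTr {n : ℕ} (A : TMat n) : ℝ≥0 :=
  (Finset.Icc 1 n).sup fun k => ttr (tpow A k)

/-- Kleene star: entrywise max of A^0, ..., A^{n-1}. -/
noncomputable def tstar {n : ℕ} (A : TMat n) : TMat n :=
  fun i j => (Finset.range n).sup fun k => tpow A k i j

/-- Tropical product of a finite chain of matrices F 0 ⊗ F 1 ⊗ ⋯ ⊗ F (k-1). -/
noncomputable def tchain {n : ℕ} : (k : ℕ) → (Fin k → TMat n) → TMat n
  | 0, _ => tId n
  | k + 1, F => tmul (F 0) (tchain k fun t => F t.succ)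

/-- Tuples of k nonnegative integers with sum m. -/
def tuples (k m : ℕ) : Finset (Fin k → Fin (m + 1)) :=
  Finset.univ.filter fun f => (∑ t, (f t : ℕ)) = m

/-- Tuples of k integers from {0,1} with sum l. -/
def binTuples (k l : ℕ) : Finset (Fin k → Fin 2) :=
  Finset.univ.filter fun j => (∑ t, (j t : ℕ)) = l

/-- The objective f_M(x) = max_{i,j} m_{ij} x_j / x_i. -/
noncomputable def fobj {n : ℕ} (M : TMat n) (x : Fin n → ℝ≥0) : ℝ≥0 :=
  Finset.univ.sup fun p : Fin n × Fin n => M p.1 p.2 * x p.2 / x p.1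

/-- Spectral radius: λ = max_{k=1..n} (tr(A^k))^{1/k}. -/
noncomputable def specRad {n : ℕ} (A : TMat n) : ℝ≥0 :=
  (Finset.Icc 1 n).sup fun k => ttr (tpow A k) ^ ((1 : ℝ) / k)

/-- σ = max over k=1..n-1, m=1..n-k and tuples (i_1,…,i_k) with sum m of
    (tr(A^{i_1} C ⋯ A^{i_k} C))^{1/m}. -/
noncomputable def sigmaC {n : ℕ} (A C : TMat n) : ℝ≥0 :=
  (Finset.Icc 1 (n - 1)).sup fun k =>
    (Finset.Icc 1 (n - k)).sup fun m =>
      (tuples k m).sup fun f =>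
        ttr (tchain k fun t => tmul (tpow A (f t : ℕ)) C) ^ ((1 : ℝ) / m)

/-- r_{k,l,m} = max over tuples (i_1,…,i_k) with sum m and (j_1,…,j_k) ∈ {0,1}^k with
    sum l of tr(A^{i_1} B^{j_1} C^{1-j_1} ⋯ A^{i_k} B^{j_k} C^{1-j_k}). -/
noncomputable def rklm {n : ℕ} (A B C : TMat n) (k l m : ℕ) : ℝ≥0 :=
  (tuples k m).sup fun f =>
    (binTuples k l).sup fun j =>
      ttr (tchain k fun t =>
        tmul (tpow A (f t : ℕ)) (tmul (tpow B (j t : ℕ)) (tpow C (1 - (j t : ℕ)))))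

/-- G(s) = max_{k,m,l} r_{k,l,m}^{1/l} s^{-m/l}. -/
noncomputable def Gfun {n : ℕ} (A B C : TMat n) (s : ℝ≥0) : ℝ≥0 :=
  (Finset.Icc 1 (n - 1)).sup fun k =>
    (Finset.Icc 1 (n - k)).sup fun m =>
      (Finset.Icc 1 k).sup fun l =>
        rklm A B C k l m ^ ((1 : ℝ) / l) * s ^ (-(m : ℝ) / l)

/-- H(t) = max_{k,m,l} r_{k,l,m}^{1/m} t^{-l/m}. -/
noncomputable def Hfun {n : ℕ} (A B C : TMat n) (t : ℝ≥0) : ℝ≥0 :=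
  (Finset.Icc 1 (n - 1)).sup fun k =>
    (Finset.Icc 1 (n - k)).sup fun m =>
      (Finset.Icc 1 k).sup fun l =>
        rklm A B C k l m ^ ((1 : ℝ) / m) * t ^ (-(l : ℝ) / m)

/-- Unconstrained r_{k,m} = max over tuples (i_1,…,i_k) with sum m of
    tr(A^{i_1} B ⋯ A^{i_k} B). -/
noncomputable def rkm {n : ℕ} (A B : TMat n) (k m : ℕ) : ℝ≥0 :=
  (tuples k m).sup fun f => ttr (tchain k fun t => tmul (tpow A (f t : ℕ)) B)

/-- Unconstrained G(s) = max_{k,m} r_{k,m}^{1/k} s^{-m/k}. -/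
noncomputable def Gfun0 {n : ℕ} (A B : TMat n) (s : ℝ≥0) : ℝ≥0 :=
  (Finset.Icc 1 (n - 1)).sup fun k =>
    (Finset.Icc 1 (n - k)).sup fun m =>
      rkm A B k m ^ ((1 : ℝ) / k) * s ^ (-(m : ℝ) / k)

/-- Unconstrained H(t) = max_{k,m} r_{k,m}^{1/m} t^{-k/m}. -/
noncomputable def Hfun0 {n : ℕ} (A B : TMat n) (t : ℝ≥0) : ℝ≥0 :=
  (Finset.Icc 1 (n - 1)).sup fun k =>
    (Finset.Icc 1 (n - k)).sup fun m =>
      rkm A B k m ^ ((1 : ℝ) / m) * t ^ (-(k : ℝ) / m)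

/-- Pareto-minimal points of a set V ⊆ ℝ≥0 × ℝ≥0. -/
def ParetoMin (V : Set (ℝ≥0 × ℝ≥0)) (p : ℝ≥0 × ℝ≥0) : Prop :=
  p ∈ V ∧ ¬∃ q ∈ V, q.1 ≤ p.1 ∧ q.2 ≤ p.2 ∧ q ≠ p

/-- The set of objective values over feasible positive vectors of the constrained problem. -/
def VC {n : ℕ} (A B C : TMat n) : Set (ℝ≥0 × ℝ≥0) :=
  {p | ∃ x : Fin n → ℝ≥0, (∀ i, 0 < x i) ∧ tmulVec C x ≤ x ∧ p = (fobj A x, fobj B x)}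

section Basics
open Finset
variable {n : ℕ}

lemma le_tmul (A B : TMat n) (i j t : Fin n) : A i t * B t j ≤ tmul A B i j := by
  exact Finset.le_sup (f := fun u => A i u * B u j) (Finset.mem_univ t)

lemma tmul_le {A B : TMat n} {i j : Fin n} {c : ℝ≥0} (h : ∀ t, A i t * B t j ≤ c) :
    tmul A B i j ≤ c := Finset.sup_le fun t _ => h t

lemma nnsup_mul {α : Type*} (s : Finset α) (f : α → ℝ≥0) (c : ℝ≥0) :
    s.sup f * c = s.sup fun x => f x * c := by
  rcases s.eq_empty_or_nonempty with h | h
  · simp [h]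
  · refine le_antisymm ?_ (Finset.sup_le fun x hx => mul_le_mul_left (Finset.le_sup hx) c)
    obtain ⟨x, hx, hfx⟩ := s.exists_mem_eq_sup h f
    rw [hfx]
    exact Finset.le_sup (f := fun x => f x * c) hx

lemma mul_nnsup {α : Type*} (s : Finset α) (f : α → ℝ≥0) (c : ℝ≥0) :
    c * s.sup f = s.sup fun x => c * f x := by
  rw [mul_comm, nnsup_mul]; simp [mul_comm]

lemma tmul_assoc (A B C : TMat n) : tmul (tmul A B) C = tmul A (tmul B C) := by
  funext i j
  show (Finset.univ.sup fun t => (tmul A B) i t * C t j) = _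
  calc (Finset.univ.sup fun t => (tmul A B) i t * C t j)
      = Finset.univ.sup fun t => Finset.univ.sup fun u => A i u * B u t * C t j := by
        refine Finset.sup_congr rfl fun t _ => ?_
        exact nnsup_mul _ _ _
    _ = Finset.univ.sup fun u => Finset.univ.sup fun t => A i u * B u t * C t j :=
        Finset.sup_comm _ _ _
    _ = Finset.univ.sup fun u => A i u * (tmul B C) u j := by
        refine Finset.sup_congr rfl fun u _ => ?_
        show _ = A i u * Finset.univ.sup fun t => B u t * C t j
        rw [mul_nnsup]
        refine Finset.sup_congr rfl fun t _ => by ring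
    _ = tmul A (tmul B C) i j := rfl

@[simp] lemma tId_same (i : Fin n) : tId n i i = 1 := if_pos rfl

@[simp] lemma tmul_tId (A : TMat n) : tmul A (tId n) = A := by
  funext i j
  refine le_antisymm (tmul_le fun t => ?_) ?_
  · rcases eq_or_ne t j with rfl | h
    · simp [tId]
    · simp [tId, h]
  · have := le_tmul A (tId n) i j j
    simpa [tId] using this

@[simp] lemma tId_tmul (A : TMat n) : tmul (tId n) A = A := by
  funext i j
  refine le_antisymm (tmul_le fun t => ?_) ?_
  · rcases eq_or_ne i t with rfl | h
    · simp [tId]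
    · simp [tId, h]
  · have := le_tmul (tId n) A i j i
    simpa [tId] using this

@[simp] lemma tpow_zero (A : TMat n) : tpow A 0 = tId n := rfl
lemma tpow_succ (A : TMat n) (k : ℕ) : tpow A (k+1) = tmul A (tpow A k) := rfl

@[simp] lemma tpow_one (A : TMat n) : tpow A 1 = A := by
  rw [tpow_succ, tpow_zero, tmul_tId]

lemma tpow_succ' (A : TMat n) (k : ℕ) : tpow A (k+1) = tmul (tpow A k) A := by
  induction k with
  | zero => simp
  | succ k ih => rw [tpow_succ A (k+1), ih, ← tmul_assoc, ← ih, ← tpow_succ]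

/-- weight of a path of length `k`. -/
noncomputable def pathW (D : TMat n) (p : ℕ → Fin n) (k : ℕ) : ℝ≥0 :=
  ∏ t ∈ Finset.range k, D (p t) (p (t+1))

lemma pathW_le_tpow (D : TMat n) (p : ℕ → Fin n) : ∀ k, pathW D p k ≤ tpow D k (p 0) (p k)
  | 0 => by simp [pathW]
  | (k+1) => by
    rw [pathW, Finset.prod_range_succ, tpow_succ']
    calc (∏ t ∈ Finset.range k, D (p t) (p (t+1))) * D (p k) (p (k+1))
        ≤ tpow D k (p 0) (p k) * D (p k) (p (k+1)) :=
          mul_le_mul_left (pathW_le_tpow D p k) _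
      _ ≤ _ := le_tmul _ _ _ _ _

lemma exists_path (D : TMat n) : ∀ (k : ℕ) (i j : Fin n), tpow D k i j ≠ 0 →
    ∃ p : ℕ → Fin n, p 0 = i ∧ p k = j ∧ pathW D p k = tpow D k i j
  | 0, i, j, h => by
    have hij : i = j := by
      by_contra hne
      exact h (by simp [tpow, tId, hne])
    subst hij
    exact ⟨fun _ => i, rfl, rfl, by simp [pathW, tpow, tId]⟩
  | (k+1), i, j, h => by
    rw [tpow_succ] at h
    have hne : (Finset.univ : Finset (Fin n)).Nonempty := by
      by_contra hemp
      rw [Finset.not_nonempty_iff_eq_empty] at hemp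
      exact h (by show Finset.univ.sup _ = 0; rw [hemp]; simp)
    obtain ⟨t₀, _, ht₀⟩ := Finset.univ.exists_mem_eq_sup hne
      (fun t => D i t * tpow D k t j)
    have h2 : tpow D k t₀ j ≠ 0 := by
      intro h0
      apply h
      show Finset.univ.sup _ = 0
      rw [ht₀, h0, mul_zero]
    obtain ⟨p', hp0, hpk, hpw⟩ := exists_path D k t₀ j h2
    refine ⟨fun m => match m with | 0 => i | (m+1) => p' m, rfl, hpk, ?_⟩
    rw [pathW, Finset.prod_range_succ']
    show (∏ t ∈ Finset.range k, D (p' t) (p' (t+1))) * D i (p' 0) = _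
    rw [hp0]
    show pathW D p' k * D i t₀ = _
    rw [hpw, tpow_succ]
    show _ = Finset.univ.sup _
    rw [ht₀]; ring

end Basics
section Bdm
variable {n : ℕ}

/-- `Bd x M c` : M ⊗ (x) ≤ c·x entrywise-witnessed. -/
def Bd (x : Fin n → ℝ≥0) (M : TMat n) (c : ℝ≥0) : Prop := ∀ i j, M i j * x j ≤ c * x i

lemma bd_tmul {x : Fin n → ℝ≥0} {M N : TMat n} {c d : ℝ≥0}
    (hM : Bd x M c) (hN : Bd x N d) : Bd x (tmul M N) (c * d) := by
  intro i j
  show (Finset.univ.sup fun t => M i t * N t j) * x j ≤ c * d * x i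
  rw [nnsup_mul]
  refine Finset.sup_le fun t _ => ?_
  calc M i t * N t j * x j = M i t * (N t j * x j) := by ring
    _ ≤ M i t * (d * x t) := mul_le_mul_right (hN t j) _
    _ = (M i t * x t) * d := by ring
    _ ≤ (c * x i) * d := mul_le_mul_left (hM i t) _
    _ = c * d * x i := by ring

lemma bd_tId (x : Fin n → ℝ≥0) : Bd x (tId n) 1 := by
  intro i j
  rcases eq_or_ne i j with rfl | h
  · simp [tId]
  · simp [tId, h]

lemma bd_tpow {x : Fin n → ℝ≥0} {M : TMat n} {c : ℝ≥0} (hM : Bd x M c) (k : ℕ) :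
    Bd x (tpow M k) (c ^ k) := by
  induction k with
  | zero => simpa using bd_tId x
  | succ k ih =>
    rw [tpow_succ, pow_succ, mul_comm (c^k) c]
    exact bd_tmul hM ih

lemma bd_tchain {x : Fin n → ℝ≥0} : ∀ (k : ℕ) (F : Fin k → TMat n) (g : Fin k → ℝ≥0),
    (∀ t, Bd x (F t) (g t)) → Bd x (tchain k F) (∏ t, g t)
  | 0, F, g, _ => by simpa [tchain] using bd_tId x
  | (k+1), F, g, h => by
    rw [Fin.prod_univ_succ]
    show Bd x (tmul (F 0) (tchain k fun t => F t.succ)) _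
    exact bd_tmul (h 0) (bd_tchain k _ (fun t => g t.succ) fun t => h t.succ)

lemma bd_ttr_le {x : Fin n → ℝ≥0} {M : TMat n} {c : ℝ≥0}
    (hx : ∀ i, 0 < x i) (hM : Bd x M c) : ttr M ≤ c := by
  refine Finset.sup_le fun i _ => ?_
  exact le_of_mul_le_mul_right (hM i i) (hx i)

lemma rpow_inv_le {x c : ℝ≥0} {m : ℕ} (hm : 1 ≤ m) (h : x ≤ c ^ m) :
    x ^ ((1 : ℝ)/m) ≤ c := by
  have hm0 : (m : ℝ) ≠ 0 := Nat.cast_ne_zero.2 (by omega)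
  have := NNReal.rpow_le_rpow h (by positivity : (0:ℝ) ≤ 1/m)
  calc x ^ ((1:ℝ)/m) ≤ (c ^ m) ^ ((1:ℝ)/m) := this
    _ = c := by
      rw [← NNReal.rpow_natCast c m, ← NNReal.rpow_mul]
      rw [mul_one_div, div_self hm0, NNReal.rpow_one]

lemma le_pow_of_rpow_le {x c : ℝ≥0} {m : ℕ} (hm : 1 ≤ m) (h : x ^ ((1 : ℝ)/m) ≤ c) :
    x ≤ c ^ m := by
  have hm0 : (m : ℝ) ≠ 0 := Nat.cast_ne_zero.2 (by omega)
  have := NNReal.rpow_le_rpow h (by positivity : (0:ℝ) ≤ (m:ℝ))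
  calc x = (x ^ ((1:ℝ)/m)) ^ (m:ℝ) := by
        rw [← NNReal.rpow_mul, one_div, inv_mul_cancel₀ hm0, NNReal.rpow_one]
    _ ≤ c ^ (m:ℝ) := this
    _ = c ^ m := NNReal.rpow_natCast c m

/-- fobj bound: Bd of A by fobj. -/
lemma bd_fobj (A : TMat n) (x : Fin n → ℝ≥0) (hx : ∀ i, 0 < x i) :
    Bd x A (fobj A x) := by
  intro i j
  have h1 : A i j * x j / x i ≤ fobj A x :=
    Finset.le_sup (f := fun p : Fin n × Fin n => A p.1 p.2 * x p.2 / x p.1)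
      (Finset.mem_univ (i, j))
  calc A i j * x j = (A i j * x j / x i) * x i := by
        rw [div_mul_cancel₀]
        exact (hx i).ne'
    _ ≤ fobj A x * x i := mul_le_mul_left h1 _

lemma bd_feas {C : TMat n} {x : Fin n → ℝ≥0} (hfeas : tmulVec C x ≤ x) : Bd x C 1 := by
  intro i j
  rw [one_mul]
  calc C i j * x j ≤ tmulVec C x i :=
        Finset.le_sup (f := fun j => C i j * x j) (Finset.mem_univ j)
    _ ≤ x i := hfeas i

/-- Part (i) : lower bounds. -/
lemma specRad_le_fobj (A : TMat n) (x : Fin n → ℝ≥0) (hx : ∀ i, 0 < x i) :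
    specRad A ≤ fobj A x := by
  refine Finset.sup_le fun k hk => ?_
  rw [Finset.mem_Icc] at hk
  exact rpow_inv_le hk.1 (bd_ttr_le hx (bd_tpow (bd_fobj A x hx) k))

lemma sigmaC_le_fobj (A C : TMat n) (x : Fin n → ℝ≥0) (hx : ∀ i, 0 < x i)
    (hfeas : tmulVec C x ≤ x) : sigmaC A C ≤ fobj A x := by
  refine Finset.sup_le fun k hk => Finset.sup_le fun m hm => Finset.sup_le fun f hf => ?_
  rw [Finset.mem_Icc] at hm
  refine rpow_inv_le hm.1 ?_
  have hb : Bd x (tchain k fun t => tmul (tpow A (f t : ℕ)) C)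
      (∏ t : Fin k, fobj A x ^ (f t : ℕ) * 1) :=
    bd_tchain k _ _ fun t => bd_tmul (bd_tpow (bd_fobj A x hx) _) (bd_feas hfeas)
  have hf2 : (∑ t, ((f t) : ℕ)) = m := by
    rw [tuples, Finset.mem_filter] at hf
    exact hf.2
  have hsum : (∏ t : Fin k, fobj A x ^ (f t : ℕ) * 1) = fobj A x ^ m := by
    simp only [mul_one]
    rw [Finset.prod_pow_eq_pow_sum, hf2]
  rw [← hsum]
  exact bd_ttr_le hx hb

end Bdm

section Rot
variable {n : ℕ}

lemma rot_aux {k : ℕ} (hk : 0 < k) (c t : ℕ) (ht : t < k) :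
    ((t + c) % k + (k - c % k)) % k = t := by
  have h1 : c % k + k * (c / k) = c := Nat.mod_add_div c k
  have h2 : c % k < k := Nat.mod_lt _ hk
  rw [Nat.mod_add_mod]
  have h4 : k * (c / k + 1) = k * (c / k) + k := by ring
  have h3 : t + c + (k - c % k) = t + k * (c / k + 1) := by omega
  rw [h3, Nat.add_mul_mod_self_left, Nat.mod_eq_of_lt ht]

lemma rot_aux' {k : ℕ} (hk : 0 < k) (c t : ℕ) (ht : t < k) :
    ((t + (k - c % k)) % k + c) % k = t := by
  have h1 : c % k + k * (c / k) = c := Nat.mod_add_div c k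
  have h2 : c % k < k := Nat.mod_lt _ hk
  rw [Nat.mod_add_mod]
  have h4 : k * (c / k + 1) = k * (c / k) + k := by ring
  have h3 : t + (k - c % k) + c = t + k * (c / k + 1) := by omega
  rw [h3, Nat.add_mul_mod_self_left, Nat.mod_eq_of_lt ht]

lemma rot_prod {M : Type*} [CommMonoid M] (k c : ℕ) (g : ℕ → M) :
    ∏ t ∈ Finset.range k, g ((t + c) % k) = ∏ t ∈ Finset.range k, g t := by
  rcases Nat.eq_zero_or_pos k with rfl | hk
  · simp
  refine Finset.prod_nbij' (fun t => (t + c) % k) (fun t => (t + (k - c % k)) % k)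
    (fun t ht => Finset.mem_range.2 (Nat.mod_lt _ hk))
    (fun t ht => Finset.mem_range.2 (Nat.mod_lt _ hk))
    (fun t ht => rot_aux hk c t (Finset.mem_range.1 ht))
    (fun t ht => rot_aux' hk c t (Finset.mem_range.1 ht))
    (fun t ht => rfl)

lemma rot_sum (k c : ℕ) (g : ℕ → ℕ) :
    ∑ t ∈ Finset.range k, g ((t + c) % k) = ∑ t ∈ Finset.range k, g t := by
  rcases Nat.eq_zero_or_pos k with rfl | hk
  · simp
  refine Finset.sum_nbij' (fun t => (t + c) % k) (fun t => (t + (k - c % k)) % k)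
    (fun t ht => Finset.mem_range.2 (Nat.mod_lt _ hk))
    (fun t ht => Finset.mem_range.2 (Nat.mod_lt _ hk))
    (fun t ht => rot_aux hk c t (Finset.mem_range.1 ht))
    (fun t ht => rot_aux' hk c t (Finset.mem_range.1 ht))
    (fun t ht => rfl)

/-- Number of occurrences of letter `v` among the first `k` letters of `w`. -/
def cnt (w : ℕ → Fin 3) (k : ℕ) (v : Fin 3) : ℕ :=
  ∑ t ∈ Finset.range k, if w t = v then 1 else 0

lemma cnt_total (w : ℕ → Fin 3) (k : ℕ) : ∑ v : Fin 3, cnt w k v = k := by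
  unfold cnt
  rw [Finset.sum_comm]
  have h : ∀ t : ℕ, ∑ v : Fin 3, (if w t = v then 1 else 0) = 1 := by
    intro t
    rw [Finset.sum_ite_eq]
    simp
  calc ∑ t ∈ Finset.range k, ∑ v : Fin 3, (if w t = v then 1 else 0)
      = ∑ t ∈ Finset.range k, 1 := Finset.sum_congr rfl fun t _ => h t
    _ = k := by simp

lemma cnt_eq_zero {w : ℕ → Fin 3} {k : ℕ} {v : Fin 3} :
    cnt w k v = 0 ↔ ∀ t < k, w t ≠ v := by
  unfold cnt
  rw [Finset.sum_eq_zero_iff]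
  constructor
  · intro h t ht hv
    have := h t (Finset.mem_range.2 ht)
    simp [hv] at this
  · intro h t ht
    simp [h t (Finset.mem_range.1 ht)]

lemma exists_of_cnt_pos {w : ℕ → Fin 3} {k : ℕ} {v : Fin 3} (h : 0 < cnt w k v) :
    ∃ t < k, w t = v := by
  by_contra hc
  push_neg at hc
  have : cnt w k v = 0 := cnt_eq_zero.2 hc
  omega

/-- product of scalars along a word splits by letter counts -/
lemma prod_letter (s : Fin 3 → ℝ≥0) (w : ℕ → Fin 3) (k : ℕ) :
    ∏ t ∈ Finset.range k, s (w t) = ∏ v : Fin 3, s v ^ cnt w k v := by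
  induction k with
  | zero => simp [cnt]
  | succ k ih =>
    rw [Finset.prod_range_succ, ih]
    have hc : ∀ v, cnt w (k+1) v = cnt w k v + (if w k = v then 1 else 0) := by
      intro v; unfold cnt; rw [Finset.sum_range_succ]
    calc (∏ v : Fin 3, s v ^ cnt w k v) * s (w k)
        = (∏ v : Fin 3, s v ^ cnt w k v) *
            ∏ v : Fin 3, s v ^ (if w k = v then 1 else 0) := by
          congr 1
          have h : ∀ v : Fin 3, s v ^ (if w k = v then 1 else 0)
              = if w k = v then s v else 1 := by
            intro v; split <;> simp
          rw [Finset.prod_congr rfl fun v _ => h v, Finset.prod_ite_eq]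
          simp
      _ = ∏ v : Fin 3, s v ^ (cnt w k v + (if w k = v then 1 else 0)) := by
          rw [← Finset.prod_mul_distrib]
          exact Finset.prod_congr rfl fun v _ => (pow_add _ _ _).symm
      _ = ∏ v : Fin 3, s v ^ cnt w (k+1) v :=
          Finset.prod_congr rfl fun v _ => by rw [hc v]

/-- Rotation of a cyclic word/path. -/
lemma rotate_cycle (Y : Fin 3 → TMat n) (w : ℕ → Fin 3) (p : ℕ → Fin n) (k r : ℕ)
    (hk : 0 < k) (hr : r < k) (hp : p k = p 0) :
    ∃ (w' : ℕ → Fin 3) (p' : ℕ → Fin n),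
      p' k = p' 0 ∧ w' (k-1) = w r ∧ (∀ v, cnt w' k v = cnt w k v) ∧
      (∏ t ∈ Finset.range k, Y (w' t) (p' t) (p' (t+1))) =
      (∏ t ∈ Finset.range k, Y (w t) (p t) (p (t+1))) := by
  refine ⟨fun t => w ((t + (r+1)) % k), fun t => p ((t + (r+1)) % k), ?_, ?_, ?_, ?_⟩
  · show p ((k + (r+1)) % k) = p ((0 + (r+1)) % k)
    congr 1
    rw [Nat.zero_add, Nat.add_comm k (r+1), Nat.add_mod_right]
  · show w ((k - 1 + (r+1)) % k) = w r
    have e1 : k - 1 + (r+1) = k + r := by omega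
    rw [e1, Nat.add_mod_left, Nat.mod_eq_of_lt hr]
  · intro v
    unfold cnt
    have hrot := rot_sum k (r+1) (fun t => if w (t % k) = v then 1 else 0)
    calc ∑ t ∈ Finset.range k, (if w ((t + (r+1)) % k) = v then 1 else 0)
        = ∑ t ∈ Finset.range k, (if w (((t + (r+1)) % k) % k) = v then 1 else 0) :=
          Finset.sum_congr rfl fun t _ => by
            rw [Nat.mod_mod_of_dvd _ (dvd_refl k)]
      _ = ∑ t ∈ Finset.range k, (if w (t % k) = v then 1 else 0) := hrot
      _ = ∑ t ∈ Finset.range k, (if w t = v then 1 else 0) :=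
          Finset.sum_congr rfl fun t ht => by
            rw [Nat.mod_eq_of_lt (Finset.mem_range.1 ht)]
  · have hg : ∀ t ∈ Finset.range k,
        Y (w ((t + (r+1)) % k)) (p ((t + (r+1)) % k)) (p ((t + 1 + (r+1)) % k))
        = (fun u => Y (w (u % k)) (p (u % k)) (p ((u+1) % k))) ((t + (r+1)) % k) := by
      intro t _
      have e1 : (t + (r+1)) % k % k = (t + (r+1)) % k :=
        Nat.mod_mod_of_dvd _ (dvd_refl k)
      have e2 : ((t + (r+1)) % k + 1) % k = (t + 1 + (r+1)) % k := by
        rw [Nat.mod_add_mod]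
        congr 1
        omega
      simp only [e1, e2]
    have hg2 : ∀ t ∈ Finset.range k,
        Y (w t) (p t) (p (t+1))
        = (fun u => Y (w (u % k)) (p (u % k)) (p ((u+1) % k))) t := by
      intro t ht
      have ht' := Finset.mem_range.1 ht
      have e1 : t % k = t := Nat.mod_eq_of_lt ht'
      simp only [e1]
      rcases Nat.lt_or_ge (t+1) k with h | h
      · rw [Nat.mod_eq_of_lt h]
      · have e2 : t + 1 = k := by omega
        rw [e2, Nat.mod_self, hp]
    rw [Finset.prod_congr rfl hg, Finset.prod_congr rfl hg2]
    exact rot_prod k (r+1) (fun u => Y (w (u % k)) (p (u % k)) (p ((u+1) % k)))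

end Rot
section ChainB
variable {n : ℕ}

lemma tchain_succ {k : ℕ} (F : Fin (k+1) → TMat n) :
    tchain (k+1) F = tmul (F 0) (tchain k fun t => F t.succ) := rfl

lemma tchain_zero (F : Fin 0 → TMat n) : tchain 0 F = tId n := rfl

lemma tchain_one (F : Fin 1 → TMat n) : tchain 1 F = F 0 := by
  rw [tchain_succ, tchain_zero, tmul_tId]

lemma prod_split (g : ℕ → ℝ≥0) (a k : ℕ) (ha : a ≤ k) :
    ∏ t ∈ Finset.range k, g t = (∏ t ∈ Finset.range a, g t) * ∏ t ∈ Finset.Ico a k, g t := by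
  have h := Finset.prod_range_mul_prod_Ico g ha
  exact h.symm

lemma cnt_split (w : ℕ → Fin 3) (a k : ℕ) (ha : a ≤ k) (v : Fin 3) :
    cnt w k v = cnt w a v + cnt (fun t => w (t + a)) (k - a) v := by
  unfold cnt
  have h := Finset.sum_range_add_sum_Ico (fun t => if w t = v then 1 else 0) ha
  rw [← h]
  congr 1
  rw [Finset.sum_Ico_eq_sum_range]
  exact Finset.sum_congr (by congr 1) fun t _ => by rw [Nat.add_comm a t]

lemma chainBound (Y : Fin 3 → TMat n) :
    ∀ (k : ℕ) (w : ℕ → Fin 3) (p : ℕ → Fin n), 0 < k → w (k-1) ≠ 0 →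
    ∃ (s : ℕ) (f : ℕ → ℕ) (c : ℕ → Fin 3),
      0 < s ∧ (∀ t, t < s → c t ≠ 0) ∧
      (∀ v : Fin 3, v ≠ 0 → cnt c s v = cnt w k v) ∧
      (∑ t ∈ Finset.range s, f t) = cnt w k 0 ∧
      (∏ t ∈ Finset.range k, Y (w t) (p t) (p (t+1))) ≤
        tchain s (fun t => tmul (tpow (Y 0) (f t.val)) (Y (c t.val))) (p 0) (p k) := by
  intro k
  induction k using Nat.strong_induction_on with
  | _ k IH =>
  intro w p hk hw
  have hex : ∃ t, w t ≠ 0 ∧ t ≤ k - 1 := ⟨k - 1, hw, le_refl _⟩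
  classical
  have hex' : ∃ t, w t ≠ 0 := ⟨k - 1, hw⟩
  set i₁ := Nat.find hex' with hi₁def
  have hi₁ : w i₁ ≠ 0 := Nat.find_spec hex'
  have hmin : ∀ t, t < i₁ → w t = 0 := fun t ht => by
    by_contra hne
    exact Nat.find_min hex' ht hne
  have hi₁k : i₁ ≤ k - 1 := Nat.find_min' hex' hw
  have hi₁k' : i₁ < k := by omega
  -- split the product
  have hsplit : (∏ t ∈ Finset.range k, Y (w t) (p t) (p (t+1)))
      = ((∏ t ∈ Finset.range i₁, Y (w t) (p t) (p (t+1))) * Y (w i₁) (p i₁) (p (i₁+1)))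
        * ∏ t ∈ Finset.Ico (i₁+1) k, Y (w t) (p t) (p (t+1)) := by
    rw [← Finset.prod_range_succ]
    exact prod_split _ (i₁+1) k (by omega)
  have hhead : (∏ t ∈ Finset.range i₁, Y (w t) (p t) (p (t+1)))
      ≤ tpow (Y 0) i₁ (p 0) (p i₁) := by
    have : (∏ t ∈ Finset.range i₁, Y (w t) (p t) (p (t+1))) = pathW (Y 0) p i₁ := by
      refine Finset.prod_congr rfl fun t ht => ?_
      rw [hmin t (Finset.mem_range.1 ht)]
    rw [this]
    exact pathW_le_tpow (Y 0) p i₁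
  -- counts on the first i₁+1 letters
  have hcnt_head : ∀ v : Fin 3, cnt w (i₁+1) v
      = (if v = 0 then i₁ else 0) + (if w i₁ = v then 1 else 0) := by
    intro v
    unfold cnt
    rw [Finset.sum_range_succ]
    congr 1
    rcases eq_or_ne v 0 with rfl | hv
    · rw [if_pos rfl]
      calc ∑ t ∈ Finset.range i₁, (if w t = 0 then 1 else 0)
          = ∑ t ∈ Finset.range i₁, 1 := Finset.sum_congr rfl fun t ht => by
            rw [if_pos (hmin t (Finset.mem_range.1 ht))]
        _ = i₁ := by simp
    · rw [if_neg hv]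
      refine Finset.sum_eq_zero fun t ht => ?_
      rw [if_neg]
      rw [hmin t (Finset.mem_range.1 ht)]
      exact fun h => hv h.symm
  rcases eq_or_lt_of_le (show i₁ + 1 ≤ k by omega) with heq | hlt
  · -- base case : i₁ = k - 1, no tail
    refine ⟨1, fun _ => i₁, fun _ => w i₁, one_pos, ?_, ?_, ?_, ?_⟩
    · intro t _; exact hi₁
    · intro v hv
      have h1 : cnt (fun _ => w i₁) 1 v = if w i₁ = v then 1 else 0 := by
        unfold cnt; rw [Finset.sum_range_one]
      rw [h1, ← heq, hcnt_head v, if_neg hv, Nat.zero_add]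
    · rw [Finset.sum_range_one, ← heq, hcnt_head 0, if_pos rfl]
      have : w i₁ ≠ 0 := hi₁
      rw [if_neg this, Nat.add_zero]
    · rw [hsplit, ← heq]
      have hempty : Finset.Ico (i₁+1) (i₁+1) = ∅ := by simp
      rw [hempty, Finset.prod_empty, mul_one]
      have hrhs : tchain 1 (fun t : Fin 1 => tmul (tpow (Y 0) i₁) (Y (w i₁))) (p 0) (p (i₁+1))
          = (tmul (tpow (Y 0) i₁) (Y (w i₁))) (p 0) (p (i₁+1)) := by
        rw [tchain_one]
      rw [hrhs]
      calc (∏ t ∈ Finset.range i₁, Y (w t) (p t) (p (t+1))) * Y (w i₁) (p i₁) (p (i₁+1))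
          ≤ tpow (Y 0) i₁ (p 0) (p i₁) * Y (w i₁) (p i₁) (p (i₁+1)) :=
            mul_le_mul_left hhead _
        _ ≤ _ := le_tmul _ _ _ _ _
  · -- inductive case
    set k' := k - (i₁ + 1) with hk'def
    have hk' : 0 < k' := by omega
    have hkk : k' < k := by omega
    set w' : ℕ → Fin 3 := fun t => w (t + (i₁+1)) with hw'def
    set p' : ℕ → Fin n := fun t => p (t + (i₁+1)) with hp'def
    have hw' : w' (k'-1) ≠ 0 := by
      show w (k' - 1 + (i₁+1)) ≠ 0
      have : k' - 1 + (i₁+1) = k - 1 := by omega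
      rw [this]; exact hw
    obtain ⟨s', f', c', hs', hc', hcnt', hsum', hprod'⟩ := IH k' hkk w' p' hk' hw'
    refine ⟨s'+1, fun m => match m with | 0 => i₁ | (m+1) => f' m,
           fun m => match m with | 0 => w i₁ | (m+1) => c' m, Nat.succ_pos _, ?_, ?_, ?_, ?_⟩
    · intro t ht
      match t with
      | 0 => exact hi₁
      | (t+1) => exact hc' t (by omega)
    · intro v hv
      have hsplit_cnt : cnt w k v = cnt w (i₁+1) v + cnt w' k' v :=
        cnt_split w (i₁+1) k (by omega) v
      have hL : cnt (fun m => match m with | 0 => w i₁ | (m+1) => c' m) (s'+1) v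
          = (if w i₁ = v then 1 else 0) + cnt c' s' v := by
        unfold cnt
        rw [Finset.sum_range_succ']
        rw [Nat.add_comm]
      rw [hL, hsplit_cnt, hcnt_head v, if_neg hv, Nat.zero_add, hcnt' v hv]
    · have hsplit_cnt : cnt w k 0 = cnt w (i₁+1) 0 + cnt w' k' 0 :=
        cnt_split w (i₁+1) k (by omega) 0
      rw [Finset.sum_range_succ']
      show (∑ t ∈ Finset.range s', f' t) + i₁ = _
      rw [hsplit_cnt, hcnt_head 0, if_pos rfl, if_neg hi₁, Nat.add_zero, hsum']
      omega
    · -- the product bound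
      have htail : (∏ t ∈ Finset.Ico (i₁+1) k, Y (w t) (p t) (p (t+1)))
          = ∏ t ∈ Finset.range k', Y (w' t) (p' t) (p' (t+1)) := by
        rw [Finset.prod_Ico_eq_prod_range]
        refine Finset.prod_congr (by congr 1) fun t _ => ?_
        show Y (w (i₁+1+t)) (p (i₁+1+t)) (p (i₁+1+t+1))
            = Y (w (t+(i₁+1))) (p (t+(i₁+1))) (p (t+1+(i₁+1)))
        have e1 : i₁+1+t = t+(i₁+1) := by omega
        have e2 : t+(i₁+1)+1 = t+1+(i₁+1) := by omega
        rw [e1, e2]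
      have hpk : p' k' = p k := by
        show p (k' + (i₁+1)) = p k
        congr 1
        omega
      have hp0 : p' 0 = p (i₁+1) := by
        show p (0 + (i₁+1)) = p (i₁+1)
        congr 1
        omega
      rw [hsplit, htail]
      rw [hp0, hpk] at hprod'
      calc ((∏ t ∈ Finset.range i₁, Y (w t) (p t) (p (t+1))) * Y (w i₁) (p i₁) (p (i₁+1)))
            * (∏ t ∈ Finset.range k', Y (w' t) (p' t) (p' (t+1)))
          ≤ (tpow (Y 0) i₁ (p 0) (p i₁) * Y (w i₁) (p i₁) (p (i₁+1)))
            * tchain s' (fun t => tmul (tpow (Y 0) (f' t.val)) (Y (c' t.val))) (p (i₁+1)) (p k) :=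
            mul_le_mul' (mul_le_mul_left hhead _) hprod'
        _ ≤ (tmul (tpow (Y 0) i₁) (Y (w i₁))) (p 0) (p (i₁+1))
            * tchain s' (fun t => tmul (tpow (Y 0) (f' t.val)) (Y (c' t.val))) (p (i₁+1)) (p k) :=
            mul_le_mul_left (le_tmul _ _ _ _ _) _
        _ ≤ _ := le_tmul _ _ _ _ _

end ChainB
section Bounds
variable {n : ℕ}

lemma fin3_cases : ∀ v : Fin 3, v = 0 ∨ v = 1 ∨ v = 2 := by decide

lemma ttr_tpow_le {A : TMat n} {α : ℝ≥0} (h : specRad A ≤ α) {k : ℕ}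
    (hk1 : 1 ≤ k) (hkn : k ≤ n) : ttr (tpow A k) ≤ α ^ k := by
  refine le_pow_of_rpow_le hk1 ?_
  refine le_trans ?_ h
  exact Finset.le_sup (f := fun k => ttr (tpow A k) ^ ((1:ℝ)/k))
    (Finset.mem_Icc.2 ⟨hk1, hkn⟩)

lemma ttr_tpowC_le {C : TMat n} (h : tTr C ≤ 1) {k : ℕ}
    (hk1 : 1 ≤ k) (hkn : k ≤ n) : ttr (tpow C k) ≤ 1 := by
  refine le_trans ?_ h
  exact Finset.le_sup (f := fun k => ttr (tpow C k)) (Finset.mem_Icc.2 ⟨hk1, hkn⟩)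

lemma sigma_bound {A C : TMat n} {α : ℝ≥0} (h : sigmaC A C ≤ α) (s m : ℕ) (f : ℕ → ℕ)
    (hs : 1 ≤ s) (hm : 1 ≤ m) (hsm : s + m ≤ n)
    (hf : (∑ t ∈ Finset.range s, f t) = m) :
    ttr (tchain s fun t : Fin s => tmul (tpow A (f t.val)) C) ≤ α ^ m := by
  have hfle : ∀ t : Fin s, f t.val ≤ m := by
    intro t
    rw [← hf]
    exact Finset.single_le_sum (fun t _ => Nat.zero_le _)
      (Finset.mem_range.2 t.isLt)
  set F : Fin s → Fin (m+1) := fun t => ⟨f t.val, by have := hfle t; omega⟩ with hF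
  have hmem : F ∈ tuples s m := by
    rw [tuples, Finset.mem_filter]
    refine ⟨Finset.mem_univ _, ?_⟩
    show (∑ t : Fin s, f t.val) = m
    rw [Fin.sum_univ_eq_sum_range (fun t => f t) s]
    exact hf
  have hmemm : m ∈ Finset.Icc 1 (n - s) := Finset.mem_Icc.2 ⟨hm, by omega⟩
  have hmems : s ∈ Finset.Icc 1 (n - 1) := Finset.mem_Icc.2 ⟨hs, by omega⟩
  have key : ttr (tchain s fun t : Fin s => tmul (tpow A ((F t : ℕ))) C) ^ ((1:ℝ)/m)
      ≤ sigmaC A C := by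
    refine le_trans (Finset.le_sup (f := fun f : Fin s → Fin (m+1) =>
      ttr (tchain s fun t => tmul (tpow A ((f t : ℕ))) C) ^ ((1:ℝ)/m)) hmem) ?_
    refine le_trans (Finset.le_sup (f := fun m => (tuples s m).sup fun f =>
      ttr (tchain s fun t => tmul (tpow A ((f t : ℕ))) C) ^ ((1:ℝ)/m))
      hmemm) ?_
    exact Finset.le_sup (f := fun s => (Finset.Icc 1 (n - s)).sup fun m =>
      (tuples s m).sup fun f =>
      ttr (tchain s fun t => tmul (tpow A ((f t : ℕ))) C) ^ ((1:ℝ)/m))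
      hmems
  exact le_pow_of_rpow_le hm (le_trans key h)

lemma rklm_bound {A B C : TMat n} {α β : ℝ≥0} (hβ : 0 < β)
    (hH : Hfun A B C β ≤ α) (s m l : ℕ)
    (hs : 1 ≤ s) (hm : 1 ≤ m) (hl : 1 ≤ l) (hls : l ≤ s) (hsm : s + m ≤ n) :
    rklm A B C s l m ≤ α ^ m * β ^ l := by
  have hmeml : l ∈ Finset.Icc 1 s := Finset.mem_Icc.2 ⟨hl, hls⟩
  have hmemm : m ∈ Finset.Icc 1 (n - s) := Finset.mem_Icc.2 ⟨hm, by omega⟩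
  have hmems : s ∈ Finset.Icc 1 (n - 1) := Finset.mem_Icc.2 ⟨hs, by omega⟩
  have key : rklm A B C s l m ^ ((1:ℝ)/m) * β ^ (-(l:ℝ)/m) ≤ α := by
    refine le_trans ?_ hH
    refine le_trans (Finset.le_sup (f := fun l =>
      rklm A B C s l m ^ ((1:ℝ)/m) * β ^ (-(l:ℝ)/m)) hmeml) ?_
    refine le_trans (Finset.le_sup (f := fun m => (Finset.Icc 1 s).sup fun l =>
      rklm A B C s l m ^ ((1:ℝ)/m) * β ^ (-(l:ℝ)/m))
      hmemm) ?_
    exact Finset.le_sup (f := fun s => (Finset.Icc 1 (n - s)).sup fun m =>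
      (Finset.Icc 1 s).sup fun l =>
      rklm A B C s l m ^ ((1:ℝ)/m) * β ^ (-(l:ℝ)/m))
      hmems
  have hm0 : (m : ℝ) ≠ 0 := Nat.cast_ne_zero.2 (by omega)
  have hbp : (0:ℝ≥0) < β ^ ((l:ℝ)/m) := NNReal.rpow_pos hβ
  have key2 : rklm A B C s l m ^ ((1:ℝ)/m) ≤ α * β ^ ((l:ℝ)/m) := by
    have hneg : β ^ (-(l:ℝ)/m) = (β ^ ((l:ℝ)/m))⁻¹ := by
      rw [neg_div, NNReal.rpow_neg]
    rw [hneg, ← div_eq_mul_inv, div_le_iff₀ hbp] at key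
    exact key
  have key3 : rklm A B C s l m ≤ (α * β ^ ((l:ℝ)/m)) ^ m := le_pow_of_rpow_le hm key2
  refine le_trans key3 ?_
  rw [mul_pow]
  refine mul_le_mul_right (le_of_eq ?_) _
  rw [← NNReal.rpow_natCast (β ^ ((l:ℝ)/m)) m, ← NNReal.rpow_mul,
    div_mul_cancel₀ _ hm0, NNReal.rpow_natCast]

lemma chain_le_rklm (A B C : TMat n) (s m l : ℕ) (f : ℕ → ℕ) (c : ℕ → Fin 3)
    (hf : (∑ t ∈ Finset.range s, f t) = m) (hc : ∀ t, t < s → c t ≠ 0)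
    (hl : cnt c s 1 = l) :
    ttr (tchain s fun t : Fin s => tmul (tpow A (f t.val)) (![A,B,C] (c t.val)))
      ≤ rklm A B C s l m := by
  have hfle : ∀ t : Fin s, f t.val ≤ m := by
    intro t
    rw [← hf]
    exact Finset.single_le_sum (fun t _ => Nat.zero_le _) (Finset.mem_range.2 t.isLt)
  set F : Fin s → Fin (m+1) := fun t => ⟨f t.val, by have := hfle t; omega⟩ with hF
  have hmemF : F ∈ tuples s m := by
    rw [tuples, Finset.mem_filter]
    refine ⟨Finset.mem_univ _, ?_⟩
    show (∑ t : Fin s, f t.val) = m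
    rw [Fin.sum_univ_eq_sum_range (fun t => f t) s]
    exact hf
  set J : Fin s → Fin 2 := fun t => if c t.val = 1 then 1 else 0 with hJ
  have hmemJ : J ∈ binTuples s l := by
    rw [binTuples, Finset.mem_filter]
    refine ⟨Finset.mem_univ _, ?_⟩
    have hval : ∀ t : Fin s, ((J t : ℕ)) = if c t.val = 1 then 1 else 0 := by
      intro t
      by_cases h : c t.val = 1
      · have hj : J t = 1 := if_pos h
        rw [hj, if_pos h]
        rfl
      · have hj : J t = 0 := if_neg h
        rw [hj, if_neg h]
        rfl
    rw [Finset.sum_congr rfl fun t _ => hval t]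
    rw [Fin.sum_univ_eq_sum_range (fun t => if c t = 1 then 1 else 0) s]
    exact hl
  have hchain : (fun t : Fin s => tmul (tpow A (f t.val)) (![A,B,C] (c t.val)))
      = fun t : Fin s => tmul (tpow A ((F t : ℕ)))
          (tmul (tpow B ((J t : ℕ))) (tpow C (1 - (J t : ℕ)))) := by
    funext t
    have h2nd : (![A,B,C] (c t.val))
        = tmul (tpow B ((J t : ℕ))) (tpow C (1 - (J t : ℕ))) := by
      rcases fin3_cases (c t.val) with h0 | h1 | h2
      · exact absurd h0 (hc t.val t.isLt)
      · have hj : J t = 1 := if_pos h1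
        have hJt : ((J t : ℕ)) = 1 := by rw [hj]; rfl
        rw [h1, hJt]
        show (![A,B,C] 1) = tmul (tpow B 1) (tpow C 0)
        rw [tpow_one, tpow_zero, tmul_tId]
        simp
      · have h1 : c t.val ≠ 1 := by rw [h2]; decide
        have hj : J t = 0 := if_neg h1
        have hJt : ((J t : ℕ)) = 0 := by rw [hj]; rfl
        rw [h2, hJt]
        show (![A,B,C] 2) = tmul (tpow B 0) (tpow C (1-0))
        rw [tpow_zero, tId_tmul]
        show (![A,B,C] 2) = tpow C 1
        rw [tpow_one]
        simp
    exact congrArg (fun M => tmul (tpow A (f t.val)) M) h2nd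
  rw [hchain]
  refine le_trans (Finset.le_sup (f := fun j : Fin s → Fin 2 =>
    ttr (tchain s fun t => tmul (tpow A ((F t : ℕ)))
      (tmul (tpow B ((j t : ℕ))) (tpow C (1 - (j t : ℕ)))))) hmemJ) ?_
  exact Finset.le_sup (f := fun f : Fin s → Fin (m+1) => (binTuples s l).sup fun j =>
    ttr (tchain s fun t => tmul (tpow A ((f t : ℕ)))
      (tmul (tpow B ((j t : ℕ))) (tpow C (1 - (j t : ℕ)))))) hmemF

end Bounds
section CycleB
variable {n : ℕ}

lemma pure_word_le (Y : Fin 3 → TMat n) (v₀ : Fin 3) (M : TMat n) (hY : Y v₀ = M)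
    (k : ℕ) (w : ℕ → Fin 3) (p : ℕ → Fin n) (hall : ∀ t < k, w t = v₀)
    (hp : p k = p 0) :
    (∏ t ∈ Finset.range k, Y (w t) (p t) (p (t+1))) ≤ ttr (tpow M k) := by
  have h1 : (∏ t ∈ Finset.range k, Y (w t) (p t) (p (t+1))) = pathW M p k := by
    refine Finset.prod_congr rfl fun t ht => ?_
    rw [hall t (Finset.mem_range.1 ht), hY]
  rw [h1]
  refine le_trans (pathW_le_tpow M p k) ?_
  rw [hp]
  exact Finset.le_sup (f := fun i => tpow M k i i) (Finset.mem_univ (p 0))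

lemma cycle_bound (A B C : TMat n) (α β : ℝ≥0)
    (hlam : specRad A ≤ α) (hmu : specRad B ≤ β)
    (hsig : sigmaC A C ≤ α) (hth : sigmaC B C ≤ β)
    (hC : tTr C ≤ 1) (hb : 0 < β) (hH : Hfun A B C β ≤ α)
    (k : ℕ) (hk1 : 1 ≤ k) (hkn : k ≤ n) (w : ℕ → Fin 3) (p : ℕ → Fin n)
    (hp : p k = p 0) :
    (∏ t ∈ Finset.range k, (![A,B,C] (w t)) (p t) (p (t+1)))
      ≤ α ^ cnt w k 0 * β ^ cnt w k 1 := by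
  have hY0 : (![A,B,C] : Fin 3 → TMat n) 0 = A := by simp
  have hY1 : (![A,B,C] : Fin 3 → TMat n) 1 = B := by simp
  have hY2 : (![A,B,C] : Fin 3 → TMat n) 2 = C := by
    simp [Matrix.cons_val_fin_one]
  have htot : cnt w k 0 + cnt w k 1 + cnt w k 2 = k := by
    have := cnt_total w k
    rw [Fin.sum_univ_three] at this
    exact this
  by_cases hb0 : cnt w k 1 = 0
  · by_cases hr0 : cnt w k 2 = 0
    · -- pure A word
      have hall : ∀ t < k, w t = 0 := by
        intro t ht
        rcases fin3_cases (w t) with h|h|h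
        · exact h
        · exact absurd h (cnt_eq_zero.1 hb0 t ht)
        · exact absurd h (cnt_eq_zero.1 hr0 t ht)
      have hak : cnt w k 0 = k := by omega
      refine le_trans (pure_word_le _ 0 A hY0 k w p hall hp) ?_
      rw [hak, hb0, pow_zero, mul_one]
      exact ttr_tpow_le hlam hk1 hkn
    · by_cases ha0 : cnt w k 0 = 0
      · -- pure C word
        have hall : ∀ t < k, w t = 2 := by
          intro t ht
          rcases fin3_cases (w t) with h|h|h
          · exact absurd h (cnt_eq_zero.1 ha0 t ht)
          · exact absurd h (cnt_eq_zero.1 hb0 t ht)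
          · exact h
        refine le_trans (pure_word_le _ 2 C hY2 k w p hall hp) ?_
        rw [ha0, hb0, pow_zero, pow_zero, mul_one]
        exact ttr_tpowC_le hC hk1 hkn
      · -- sigma case : A and C letters, at least one A
        obtain ⟨ts, hts, hwts⟩ := exists_of_cnt_pos (show 0 < cnt w k 2 by omega)
        have hwts' : w ts ≠ 0 := by rw [hwts]; decide
        obtain ⟨w', p', hp', hw'last, hcnt', hprodeq⟩ :=
          rotate_cycle ![A,B,C] w p k ts (by omega) hts hp
        have hw'k : w' (k-1) ≠ 0 := by rw [hw'last]; exact hwts'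
        obtain ⟨s, f, c, hs, hcne, hccnt, hsum, hle⟩ :=
          chainBound ![A,B,C] k w' p' (by omega) hw'k
        have hc1 : cnt c s 1 = cnt w k 1 := by rw [hccnt 1 (by decide), hcnt' 1]
        have hc2 : cnt c s 2 = cnt w k 2 := by rw [hccnt 2 (by decide), hcnt' 2]
        have hc0 : cnt c s 0 = 0 := cnt_eq_zero.2 hcne
        have hstot : cnt c s 0 + cnt c s 1 + cnt c s 2 = s := by
          have := cnt_total c s
          rw [Fin.sum_univ_three] at this
          exact this
        have hsuma : (∑ t ∈ Finset.range s, f t) = cnt w k 0 := by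
          rw [hsum, hcnt' 0]
        have hcall : ∀ t < s, c t = 2 := by
          intro t ht
          rcases fin3_cases (c t) with h|h|h
          · exact absurd h (hcne t ht)
          · have hz : cnt c s 1 = 0 := by omega
            exact absurd h (cnt_eq_zero.1 hz t ht)
          · exact h
        have hchain : (fun t : Fin s =>
              tmul (tpow ((![A,B,C] : Fin 3 → TMat n) 0) (f t.val)) (![A,B,C] (c t.val)))
            = fun t : Fin s => tmul (tpow A (f t.val)) C := by
          funext t
          rw [hcall t.val t.isLt, hY2, hY0]
        rw [← hprodeq]
        calc (∏ t ∈ Finset.range k, (![A,B,C] (w' t)) (p' t) (p' (t+1)))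
            ≤ tchain s (fun t => tmul (tpow ((![A,B,C] : Fin 3 → TMat n) 0) (f t.val))
                (![A,B,C] (c t.val))) (p' 0) (p' k) := hle
          _ = tchain s (fun t : Fin s => tmul (tpow A (f t.val)) C) (p' 0) (p' 0) := by
              rw [hchain, hp']
          _ ≤ ttr (tchain s (fun t : Fin s => tmul (tpow A (f t.val)) C)) :=
              Finset.le_sup (f := fun i => tchain s
                (fun t : Fin s => tmul (tpow A (f t.val)) C) i i) (Finset.mem_univ _)
          _ ≤ α ^ cnt w k 0 := sigma_bound hsig s (cnt w k 0) f (by omega) (by omega)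
              (by omega) hsuma
          _ = α ^ cnt w k 0 * β ^ cnt w k 1 := by rw [hb0, pow_zero, mul_one]
  · by_cases ha0 : cnt w k 0 = 0
    · by_cases hr0 : cnt w k 2 = 0
      · -- pure B word
        have hall : ∀ t < k, w t = 1 := by
          intro t ht
          rcases fin3_cases (w t) with h|h|h
          · exact absurd h (cnt_eq_zero.1 ha0 t ht)
          · exact h
          · exact absurd h (cnt_eq_zero.1 hr0 t ht)
        have hbk : cnt w k 1 = k := by omega
        refine le_trans (pure_word_le _ 1 B hY1 k w p hall hp) ?_
        rw [ha0, hbk, pow_zero, one_mul]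
        exact ttr_tpow_le hmu hk1 hkn
      · -- theta case : B and C letters
        have hYY : ∀ v : Fin 3, (![B,A,C] : Fin 3 → TMat n) ((![1,0,2] : Fin 3 → Fin 3) v)
            = ![A,B,C] v := by
          intro v
          rcases fin3_cases v with h|h|h <;> rw [h] <;> simp [Matrix.cons_val_fin_one]
        have hm3 : ∀ u v : Fin 3, ((![1,0,2] : Fin 3 → Fin 3) u = v)
            ↔ (u = (![1,0,2] : Fin 3 → Fin 3) v) := by decide
        set w₂ : ℕ → Fin 3 := fun t => (![1,0,2] : Fin 3 → Fin 3) (w t) with hw2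
        have hcnt2 : ∀ v, cnt w₂ k v = cnt w k ((![1,0,2] : Fin 3 → Fin 3) v) := by
          intro v
          unfold cnt
          exact Finset.sum_congr rfl fun t _ => if_congr (hm3 (w t) v) rfl rfl
        have hpr : (∏ t ∈ Finset.range k, (![A,B,C] (w t)) (p t) (p (t+1)))
            = ∏ t ∈ Finset.range k, ((![B,A,C] : Fin 3 → TMat n) (w₂ t)) (p t) (p (t+1)) := by
          refine Finset.prod_congr rfl fun t _ => ?_
          rw [show w₂ t = (![1,0,2] : Fin 3 → Fin 3) (w t) from rfl, hYY (w t)]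
        obtain ⟨ts, hts, hwts⟩ := exists_of_cnt_pos (show 0 < cnt w k 2 by omega)
        have hwts' : w₂ ts ≠ 0 := by
          show (![1,0,2] : Fin 3 → Fin 3) (w ts) ≠ 0
          rw [hwts]
          decide
        obtain ⟨w', p', hp', hw'last, hcnt', hprodeq⟩ :=
          rotate_cycle ![B,A,C] w₂ p k ts (by omega) hts hp
        have hw'k : w' (k-1) ≠ 0 := by rw [hw'last]; exact hwts'
        obtain ⟨s, f, c, hs, hcne, hccnt, hsum, hle⟩ :=
          chainBound ![B,A,C] k w' p' (by omega) hw'k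
        have hZ0 : (![B,A,C] : Fin 3 → TMat n) 0 = B := by simp
        have hZ2 : (![B,A,C] : Fin 3 → TMat n) 2 = C := by simp [Matrix.cons_val_fin_one]
        have hc1 : cnt c s 1 = cnt w k 0 := by
          rw [hccnt 1 (by decide), hcnt' 1, hcnt2 1]
          congr 1
        have hc2 : cnt c s 2 = cnt w k 2 := by
          rw [hccnt 2 (by decide), hcnt' 2, hcnt2 2]
          congr 1
        have hc0 : cnt c s 0 = 0 := cnt_eq_zero.2 hcne
        have hstot : cnt c s 0 + cnt c s 1 + cnt c s 2 = s := by
          have := cnt_total c s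
          rw [Fin.sum_univ_three] at this
          exact this
        have hsuma : (∑ t ∈ Finset.range s, f t) = cnt w k 1 := by
          rw [hsum, hcnt' 0, hcnt2 0]
          congr 1
        have hcall : ∀ t < s, c t = 2 := by
          intro t ht
          rcases fin3_cases (c t) with h|h|h
          · exact absurd h (hcne t ht)
          · have hz : cnt c s 1 = 0 := by omega
            exact absurd h (cnt_eq_zero.1 hz t ht)
          · exact h
        have hchain : (fun t : Fin s =>
              tmul (tpow ((![B,A,C] : Fin 3 → TMat n) 0) (f t.val)) (![B,A,C] (c t.val)))
            = fun t : Fin s => tmul (tpow B (f t.val)) C := by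
          funext t
          rw [hcall t.val t.isLt, hZ2, hZ0]
        rw [hpr, ← hprodeq]
        calc (∏ t ∈ Finset.range k, ((![B,A,C] : Fin 3 → TMat n) (w' t)) (p' t) (p' (t+1)))
            ≤ tchain s (fun t => tmul (tpow ((![B,A,C] : Fin 3 → TMat n) 0) (f t.val))
                (![B,A,C] (c t.val))) (p' 0) (p' k) := hle
          _ = tchain s (fun t : Fin s => tmul (tpow B (f t.val)) C) (p' 0) (p' 0) := by
              rw [hchain, hp']
          _ ≤ ttr (tchain s (fun t : Fin s => tmul (tpow B (f t.val)) C)) :=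
              Finset.le_sup (f := fun i => tchain s
                (fun t : Fin s => tmul (tpow B (f t.val)) C) i i) (Finset.mem_univ _)
          _ ≤ β ^ cnt w k 1 := sigma_bound hth s (cnt w k 1) f (by omega) (by omega)
              (by omega) hsuma
          _ = α ^ cnt w k 0 * β ^ cnt w k 1 := by rw [ha0, pow_zero, one_mul]
    · -- rklm case : both A and B letters present
      obtain ⟨ts, hts, hwts⟩ := exists_of_cnt_pos (show 0 < cnt w k 1 by omega)
      have hwts' : w ts ≠ 0 := by rw [hwts]; decide
      obtain ⟨w', p', hp', hw'last, hcnt', hprodeq⟩ :=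
        rotate_cycle ![A,B,C] w p k ts (by omega) hts hp
      have hw'k : w' (k-1) ≠ 0 := by rw [hw'last]; exact hwts'
      obtain ⟨s, f, c, hs, hcne, hccnt, hsum, hle⟩ :=
        chainBound ![A,B,C] k w' p' (by omega) hw'k
      have hc1 : cnt c s 1 = cnt w k 1 := by rw [hccnt 1 (by decide), hcnt' 1]
      have hc2 : cnt c s 2 = cnt w k 2 := by rw [hccnt 2 (by decide), hcnt' 2]
      have hc0 : cnt c s 0 = 0 := cnt_eq_zero.2 hcne
      have hstot : cnt c s 0 + cnt c s 1 + cnt c s 2 = s := by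
        have := cnt_total c s
        rw [Fin.sum_univ_three] at this
        exact this
      have hsuma : (∑ t ∈ Finset.range s, f t) = cnt w k 0 := by
        rw [hsum, hcnt' 0]
      have hchain : (fun t : Fin s =>
            tmul (tpow ((![A,B,C] : Fin 3 → TMat n) 0) (f t.val)) (![A,B,C] (c t.val)))
          = fun t : Fin s => tmul (tpow A (f t.val)) (![A,B,C] (c t.val)) := by
        funext t
        rw [hY0]
      rw [← hprodeq]
      calc (∏ t ∈ Finset.range k, (![A,B,C] (w' t)) (p' t) (p' (t+1)))
          ≤ tchain s (fun t => tmul (tpow ((![A,B,C] : Fin 3 → TMat n) 0) (f t.val))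
              (![A,B,C] (c t.val))) (p' 0) (p' k) := hle
        _ = tchain s (fun t : Fin s => tmul (tpow A (f t.val)) (![A,B,C] (c t.val)))
              (p' 0) (p' 0) := by rw [hchain, hp']
        _ ≤ ttr (tchain s (fun t : Fin s => tmul (tpow A (f t.val)) (![A,B,C] (c t.val)))) :=
            Finset.le_sup (f := fun i => tchain s
              (fun t : Fin s => tmul (tpow A (f t.val)) (![A,B,C] (c t.val))) i i)
              (Finset.mem_univ _)
        _ ≤ rklm A B C s (cnt w k 1) (cnt w k 0) :=
            chain_le_rklm A B C s (cnt w k 0) (cnt w k 1) f c hsuma hcne hc1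
        _ ≤ α ^ cnt w k 0 * β ^ cnt w k 1 := rklm_bound hb hH s (cnt w k 0) (cnt w k 1)
            (by omega) (by omega) (by omega) (by omega) (by omega)

end CycleB
section TrD
variable {n : ℕ}

lemma fin3_sup (g : Fin 3 → ℝ≥0) : Finset.univ.sup g = g 0 ⊔ g 1 ⊔ g 2 := by
  refine le_antisymm (Finset.sup_le fun v _ => ?_) ?_
  · rcases fin3_cases v with h|h|h <;> rw [h]
    · exact le_sup_of_le_left le_sup_left
    · exact le_sup_of_le_left le_sup_right
    · exact le_sup_right
  · exact sup_le (sup_le (Finset.le_sup (Finset.mem_univ 0))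
      (Finset.le_sup (Finset.mem_univ 1))) (Finset.le_sup (Finset.mem_univ 2))

lemma exists_word (G : Fin 3 → ℕ → ℝ≥0) : ∀ k : ℕ, ∃ w : ℕ → Fin 3,
    (∏ t ∈ Finset.range k, Finset.univ.sup fun v => G v t)
      = ∏ t ∈ Finset.range k, G (w t) t := by
  intro k
  induction k with
  | zero => exact ⟨fun _ => 0, by simp⟩
  | succ k ih =>
    obtain ⟨w, hw⟩ := ih
    obtain ⟨v₀, _, hv₀⟩ := Finset.univ.exists_mem_eq_sup
      (Finset.univ_nonempty) (fun v : Fin 3 => G v k)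
    refine ⟨fun t => if t = k then v₀ else w t, ?_⟩
    rw [Finset.prod_range_succ, Finset.prod_range_succ, hw]
    show (∏ t ∈ Finset.range k, G (w t) t) * Finset.univ.sup (fun v => G v k)
        = (∏ x ∈ Finset.range k, G (if x = k then v₀ else w x) x)
          * G (if k = k then v₀ else w k) k
    rw [if_pos rfl, ← hv₀]
    congr 1
    refine Finset.prod_congr rfl fun t ht => ?_
    rw [if_neg (by have := Finset.mem_range.1 ht; omega)]

lemma tTr_D_le_one (A B C : TMat n) (α β : ℝ≥0)
    (hα : 0 < α) (hβ : 0 < β)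
    (hlam : specRad A ≤ α) (hmu : specRad B ≤ β)
    (hsig : sigmaC A C ≤ α) (hth : sigmaC B C ≤ β)
    (hC : tTr C ≤ 1) (hH : Hfun A B C β ≤ α) :
    tTr (tadd (tadd (tsmul α⁻¹ A) (tsmul β⁻¹ B)) C) ≤ 1 := by
  set D : TMat n := tadd (tadd (tsmul α⁻¹ A) (tsmul β⁻¹ B)) C with hD
  have hDentry : ∀ u u' : Fin n, D u u'
      = Finset.univ.sup fun v : Fin 3 =>
          (![α⁻¹, β⁻¹, 1] : Fin 3 → ℝ≥0) v * (![A,B,C] v) u u' := by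
    intro u u'
    rw [fin3_sup]
    show (α⁻¹ * A u u' ⊔ β⁻¹ * B u u') ⊔ C u u' = _
    have e0 : (![α⁻¹, β⁻¹, 1] : Fin 3 → ℝ≥0) 0 * (![A,B,C] 0 : TMat n) u u'
        = α⁻¹ * A u u' := by simp
    have e1 : (![α⁻¹, β⁻¹, 1] : Fin 3 → ℝ≥0) 1 * (![A,B,C] 1 : TMat n) u u'
        = β⁻¹ * B u u' := by simp
    have e2 : (![α⁻¹, β⁻¹, 1] : Fin 3 → ℝ≥0) 2 * (![A,B,C] 2 : TMat n) u u'
        = C u u' := by simp [Matrix.cons_val_fin_one]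
    rw [e0, e1, e2]
  refine Finset.sup_le fun k hk => ?_
  rw [Finset.mem_Icc] at hk
  refine Finset.sup_le fun i _ => ?_
  by_cases h0 : tpow D k i i = 0
  · rw [h0]; exact zero_le
  obtain ⟨p, hp0, hpk, hpw⟩ := exists_path D k i i h0
  rw [← hpw]
  unfold pathW
  have hentry : (∏ t ∈ Finset.range k, D (p t) (p (t+1)))
      = ∏ t ∈ Finset.range k, Finset.univ.sup fun v : Fin 3 =>
          (![α⁻¹, β⁻¹, 1] : Fin 3 → ℝ≥0) v * (![A,B,C] v) (p t) (p (t+1)) :=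
    Finset.prod_congr rfl fun t _ => hDentry (p t) (p (t+1))
  obtain ⟨w, hword⟩ := exists_word
    (fun v t => (![α⁻¹, β⁻¹, 1] : Fin 3 → ℝ≥0) v * (![A,B,C] v) (p t) (p (t+1))) k
  rw [hentry, hword, Finset.prod_mul_distrib]
  have hcyc : p k = p 0 := by rw [hp0, hpk]
  have hraw : (∏ t ∈ Finset.range k, (![A,B,C] (w t)) (p t) (p (t+1)))
      ≤ α ^ cnt w k 0 * β ^ cnt w k 1 :=
    cycle_bound A B C α β hlam hmu hsig hth hC hβ hH k hk.1 hk.2 w p hcyc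
  have hsc : (∏ t ∈ Finset.range k, (![α⁻¹, β⁻¹, 1] : Fin 3 → ℝ≥0) (w t))
      = α⁻¹ ^ cnt w k 0 * β⁻¹ ^ cnt w k 1 * 1 ^ cnt w k 2 := by
    rw [prod_letter]
    rw [Fin.prod_univ_three]
    have e0 : (![α⁻¹, β⁻¹, 1] : Fin 3 → ℝ≥0) 0 = α⁻¹ := by simp
    have e1 : (![α⁻¹, β⁻¹, 1] : Fin 3 → ℝ≥0) 1 = β⁻¹ := by simp
    have e2 : (![α⁻¹, β⁻¹, 1] : Fin 3 → ℝ≥0) 2 = 1 := by simp [Matrix.cons_val_fin_one]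
    rw [e0, e1, e2]
  rw [hsc, one_pow, mul_one]
  calc α⁻¹ ^ cnt w k 0 * β⁻¹ ^ cnt w k 1
        * ∏ t ∈ Finset.range k, (![A,B,C] (w t)) (p t) (p (t+1))
      ≤ α⁻¹ ^ cnt w k 0 * β⁻¹ ^ cnt w k 1 * (α ^ cnt w k 0 * β ^ cnt w k 1) :=
        mul_le_mul_right hraw _
    _ = (α⁻¹ ^ cnt w k 0 * α ^ cnt w k 0) * (β⁻¹ ^ cnt w k 1 * β ^ cnt w k 1) := by ring
    _ = 1 := by
        rw [← mul_pow, ← mul_pow, inv_mul_cancel₀ hα.ne', inv_mul_cancel₀ hβ.ne',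
          one_pow, one_pow, mul_one]

end TrD
section Star
variable {n : ℕ}

lemma cycle_prod_le (D : TMat n) (hTr : tTr D ≤ 1) (p : ℕ → Fin n) (s tt : ℕ)
    (hst : s < tt) (httn : tt ≤ n) (hcyc : p s = p tt) :
    (∏ m ∈ Finset.Ico s tt, D (p m) (p (m+1))) ≤ 1 := by
  set d := tt - s with hd
  have hd1 : 1 ≤ d := by omega
  have hmid : (∏ m ∈ Finset.Ico s tt, D (p m) (p (m+1)))
      = pathW D (fun m => p (m + s)) d := by
    rw [Finset.prod_Ico_eq_prod_range]
    unfold pathW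
    refine Finset.prod_congr (by congr 1) fun m _ => ?_
    show D (p (s + m)) (p (s + m + 1)) = D (p (m + s)) (p (m + 1 + s))
    have e1 : s + m = m + s := by omega
    have e2 : m + s + 1 = m + 1 + s := by omega
    rw [e1, e2]
  rw [hmid]
  refine le_trans (pathW_le_tpow D _ d) ?_
  have e3 : d + s = tt := by omega
  have e4 : (0:ℕ) + s = s := by omega
  rw [e3, e4, ← hcyc]
  refine le_trans (Finset.le_sup (f := fun i => tpow D d i i) (Finset.mem_univ (p s))) ?_
  refine le_trans ?_ hTr
  exact Finset.le_sup (f := fun k => ttr (tpow D k)) (Finset.mem_Icc.2 ⟨hd1, by omega⟩)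

lemma star_absorb (D : TMat n) (hn : 0 < n) (hTr : tTr D ≤ 1) (i j : Fin n) :
    tpow D n i j ≤ tstar D i j := by
  by_cases h0 : tpow D n i j = 0
  · rw [h0]; exact zero_le
  obtain ⟨p, hp0, hpn, hpw⟩ := exists_path D n i j h0
  have hninj : ¬ Function.Injective (fun t : Fin (n+1) => p t.val) := by
    intro hinj
    have := Fintype.card_le_of_injective _ hinj
    simp at this
  rw [Function.not_injective_iff] at hninj
  obtain ⟨u, v, hequv, hneuv⟩ := hninj
  set s := min u.val v.val with hs
  set tt := max u.val v.val with htt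
  have hst : s < tt := by
    rcases Nat.lt_or_ge u.val v.val with h | h
    · omega
    · have : u.val ≠ v.val := fun hh => hneuv (Fin.ext hh)
      omega
  have httn : tt ≤ n := by
    have h1 := u.isLt
    have h2 := v.isLt
    omega
  have hcyc : p s = p tt := by
    rcases Nat.lt_or_ge u.val v.val with h | h
    · have e1 : s = u.val := by omega
      have e2 : tt = v.val := by omega
      rw [e1, e2]; exact hequv
    · have e1 : s = v.val := by omega
      have e2 : tt = u.val := by omega
      rw [e1, e2]; exact hequv.symm
  set d := tt - s with hd
  have hd1 : 1 ≤ d := by omega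
  set len := n - d with hlen
  have hslen : s ≤ len := by omega
  -- splice
  set q : ℕ → Fin n := fun m => if m < s then p m else p (m + d) with hq
  have houter : pathW D q len
      = (∏ m ∈ Finset.range s, D (p m) (p (m+1)))
        * ∏ m ∈ Finset.Ico tt n, D (p m) (p (m+1)) := by
    unfold pathW
    rw [prod_split (fun m => D (q m) (q (m+1))) s len hslen]
    congr 1
    · refine Finset.prod_congr rfl fun m hm => ?_
      have hms := Finset.mem_range.1 hm
      have hqm : q m = p m := if_pos hms
      have hqm1 : q (m+1) = p (m+1) := by
        rcases Nat.lt_or_ge (m+1) s with h | h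
        · exact if_pos h
        · have hms1 : m + 1 = s := by omega
          show q (m+1) = p (m+1)
          rw [hms1]
          have : q s = p (s + d) := if_neg (by omega)
          rw [this]
          have : s + d = tt := by omega
          rw [this, ← hcyc]
      rw [hqm, hqm1]
    · rw [Finset.prod_Ico_eq_prod_range, Finset.prod_Ico_eq_prod_range]
      refine Finset.prod_congr (by congr 1; omega) fun m _ => ?_
      have hq1 : q (s + m) = p (s + m + d) := if_neg (by omega)
      have hq2 : q (s + m + 1) = p (s + m + 1 + d) := if_neg (by omega)
      rw [hq1, hq2]
      have e1 : s + m + d = tt + m := by omega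
      have e2 : s + m + 1 + d = tt + m + 1 := by omega
      rw [e1, e2]
  have hsplit : pathW D p n
      = ((∏ m ∈ Finset.range s, D (p m) (p (m+1)))
          * ∏ m ∈ Finset.Ico tt n, D (p m) (p (m+1)))
        * ∏ m ∈ Finset.Ico s tt, D (p m) (p (m+1)) := by
    unfold pathW
    rw [prod_split (fun m => D (p m) (p (m+1))) s n (by omega)]
    rw [← Finset.prod_Ico_consecutive (fun m => D (p m) (p (m+1)))
      (show s ≤ tt by omega) (show tt ≤ n by omega)]
    ring
  have hq0 : q 0 = i := by
    rcases Nat.lt_or_ge 0 s with h | h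
    · rw [← hp0]; exact if_pos h
    · have hs0 : s = 0 := by omega
      have : q 0 = p (0 + d) := if_neg (by omega)
      rw [this]
      have e : (0:ℕ) + d = tt := by omega
      rw [e, ← hcyc, hs0, hp0]
  have hqlen : q len = j := by
    have : q len = p (len + d) := if_neg (by omega)
    rw [this]
    have e : len + d = n := by omega
    rw [e, hpn]
  calc tpow D n i j = pathW D p n := hpw.symm
    _ = ((∏ m ∈ Finset.range s, D (p m) (p (m+1)))
          * ∏ m ∈ Finset.Ico tt n, D (p m) (p (m+1)))
        * ∏ m ∈ Finset.Ico s tt, D (p m) (p (m+1)) := hsplit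
    _ ≤ ((∏ m ∈ Finset.range s, D (p m) (p (m+1)))
          * ∏ m ∈ Finset.Ico tt n, D (p m) (p (m+1))) * 1 :=
        mul_le_mul_right (cycle_prod_le D hTr p s tt hst httn hcyc) _
    _ = pathW D q len := by rw [mul_one, houter]
    _ ≤ tpow D len (q 0) (q len) := pathW_le_tpow D q len
    _ = tpow D len i j := by rw [hq0, hqlen]
    _ ≤ tstar D i j :=
        Finset.le_sup (f := fun k => tpow D k i j) (Finset.mem_range.2 (by omega))

/-- The Kleene-star based fixed point. -/
lemma star_fixed (D : TMat n) (hn : 0 < n) (hTr : tTr D ≤ 1) :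
    ∃ x : Fin n → ℝ≥0, (∀ i, 0 < x i) ∧ tmulVec D x ≤ x := by
  refine ⟨fun i => Finset.univ.sup fun j => tstar D i j, ?_, ?_⟩
  · intro i
    have h1 : (1:ℝ≥0) ≤ tstar D i i := by
      have : tpow D 0 i i ≤ tstar D i i :=
        Finset.le_sup (f := fun k => tpow D k i i) (Finset.mem_range.2 hn)
      rw [tpow_zero] at this
      simpa using this
    have h2 : tstar D i i ≤ Finset.univ.sup fun j => tstar D i j :=
      Finset.le_sup (Finset.mem_univ i)
    exact lt_of_lt_of_le one_pos (le_trans h1 h2)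
  · intro i
    show (Finset.univ.sup fun t => D i t * Finset.univ.sup fun j => tstar D t j)
        ≤ Finset.univ.sup fun j => tstar D i j
    refine Finset.sup_le fun t _ => ?_
    rw [mul_nnsup]
    refine Finset.sup_le fun j _ => ?_
    show D i t * ((Finset.range n).sup fun c => tpow D c t j) ≤ _
    rw [mul_nnsup]
    refine Finset.sup_le fun c hc => ?_
    have h1 : D i t * tpow D c t j ≤ tpow D (c+1) i j := le_tmul D (tpow D c) i j t
    rcases Nat.lt_or_ge (c+1) n with h | h
    · refine le_trans h1 (le_trans (Finset.le_sup (f := fun k => tpow D k i j)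
        (Finset.mem_range.2 h)) ?_)
      exact Finset.le_sup (f := fun j => tstar D i j) (Finset.mem_univ j)
    · have hcn := Finset.mem_range.1 hc
      have hc1 : c + 1 = n := by omega
      refine le_trans h1 ?_
      rw [hc1]
      refine le_trans (star_absorb D hn hTr i j) ?_
      exact Finset.le_sup (f := fun j => tstar D i j) (Finset.mem_univ j)

end Star
/-- If H(max(μ,θ)) ≤ max(λ,σ), then (i) every feasible positive x satisfies
f_A(x) ≥ max(λ,σ) and f_B(x) ≥ max(μ,θ); (ii) some feasible positive x attains both values;
consequently the Pareto frontier reduces to the single point (max(λ,σ), max(μ,θ)). -/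
theorem stmt14 {n : ℕ} (A B C : TMat n)
    (hlam : 0 < specRad A) (hmu : 0 < specRad B) (hC : tTr C ≤ 1)
    (hH : Hfun A B C (specRad B ⊔ sigmaC B C) ≤ specRad A ⊔ sigmaC A C) :
    (∀ x : Fin n → ℝ≥0, (∀ i, 0 < x i) → tmulVec C x ≤ x →
        specRad A ⊔ sigmaC A C ≤ fobj A x ∧ specRad B ⊔ sigmaC B C ≤ fobj B x) ∧
    (∃ x : Fin n → ℝ≥0, (∀ i, 0 < x i) ∧ tmulVec C x ≤ x ∧
        fobj A x = specRad A ⊔ sigmaC A C ∧ fobj B x = specRad B ⊔ sigmaC B C) ∧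
    {p | ParetoMin (VC A B C) p} =
      {(specRad A ⊔ sigmaC A C, specRad B ⊔ sigmaC B C)} := by
  set α := specRad A ⊔ sigmaC A C with hαdef
  set β := specRad B ⊔ sigmaC B C with hβdef
  have hα : 0 < α := lt_of_lt_of_le hlam le_sup_left
  have hβ : 0 < β := lt_of_lt_of_le hmu le_sup_left
  have hn : 0 < n := by
    rcases Nat.eq_zero_or_pos n with h0 | h
    · exfalso
      subst h0
      have hz : specRad A = 0 := by
        unfold specRad
        rw [show Finset.Icc 1 0 = (∅ : Finset ℕ) by decide]
        simp
      rw [hz] at hlam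
      exact lt_irrefl 0 hlam
    · exact h
  have part1 : ∀ x : Fin n → ℝ≥0, (∀ i, 0 < x i) → tmulVec C x ≤ x →
      α ≤ fobj A x ∧ β ≤ fobj B x := by
    intro x hx hfeas
    exact ⟨sup_le (specRad_le_fobj A x hx) (sigmaC_le_fobj A C x hx hfeas),
      sup_le (specRad_le_fobj B x hx) (sigmaC_le_fobj B C x hx hfeas)⟩
  -- construction of the optimal x
  set D : TMat n := tadd (tadd (tsmul α⁻¹ A) (tsmul β⁻¹ B)) C with hDdef
  have hTrD : tTr D ≤ 1 :=
    tTr_D_le_one A B C α β hα hβ le_sup_left le_sup_left le_sup_right le_sup_right hC hH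
  obtain ⟨x, hx, hDx⟩ := star_fixed D hn hTrD
  have hCD : ∀ i j, C i j ≤ D i j := fun i j => le_sup_right
  have hAD : ∀ i j, α⁻¹ * A i j ≤ D i j := fun i j => le_sup_of_le_left le_sup_left
  have hBD : ∀ i j, β⁻¹ * B i j ≤ D i j := fun i j => le_sup_of_le_left le_sup_right
  have hDxe : ∀ i j, D i j * x j ≤ x i := by
    intro i j
    exact le_trans (Finset.le_sup (f := fun j => D i j * x j) (Finset.mem_univ j)) (hDx i)
  have hfeas : tmulVec C x ≤ x := by
    intro i
    refine le_trans ?_ (hDx i)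
    show (Finset.univ.sup fun j => C i j * x j) ≤ Finset.univ.sup fun j => D i j * x j
    exact Finset.sup_le fun j _ => le_trans (mul_le_mul_left (hCD i j) _)
      (Finset.le_sup (f := fun j => D i j * x j) (Finset.mem_univ j))
  have hup : ∀ (M : TMat n) (γ : ℝ≥0), 0 < γ → (∀ i j, γ⁻¹ * M i j ≤ D i j) →
      fobj M x ≤ γ := by
    intro M γ hγ hMD
    refine Finset.sup_le fun pr _ => ?_
    rw [div_le_iff₀ (hx pr.1)]
    calc M pr.1 pr.2 * x pr.2 = γ * (γ⁻¹ * M pr.1 pr.2) * x pr.2 := by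
          rw [← mul_assoc, mul_inv_cancel₀ hγ.ne', one_mul]
      _ ≤ γ * D pr.1 pr.2 * x pr.2 :=
          mul_le_mul_left (mul_le_mul_right (hMD pr.1 pr.2) γ) _
      _ = γ * (D pr.1 pr.2 * x pr.2) := mul_assoc _ _ _
      _ ≤ γ * x pr.1 := mul_le_mul_right (hDxe pr.1 pr.2) γ
  have hfA : fobj A x = α :=
    le_antisymm (hup A α hα hAD) (part1 x hx hfeas).1
  have hfB : fobj B x = β :=
    le_antisymm (hup B β hβ hBD) (part1 x hx hfeas).2
  refine ⟨part1, ⟨x, hx, hfeas, hfA, hfB⟩, ?_⟩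
  ext pt
  simp only [Set.mem_setOf_eq, Set.mem_singleton_iff]
  constructor
  · rintro ⟨hmem, hmin⟩
    obtain ⟨y, hy, hyf, hyeq⟩ := hmem
    have h1 := part1 y hy hyf
    by_contra hne
    apply hmin
    refine ⟨(α, β), ⟨x, hx, hfeas, by rw [hfA, hfB]⟩, ?_, ?_, ?_⟩
    · rw [hyeq]; exact h1.1
    · rw [hyeq]; exact h1.2
    · intro h
      exact hne (by rw [← h])
  · rintro rfl
    refine ⟨⟨x, hx, hfeas, by rw [hfA, hfB]⟩, ?_⟩
    rintro ⟨q, ⟨y, hy, hyf, rfl⟩, hq1, hq2, hqne⟩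
    have h1 := part1 y hy hyf
    exact hqne (Prod.ext (le_antisymm hq1 h1.1) (le_antisymm hq2 h1.2))
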